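/- Let δ > 0, let P > 0 solve PA + AᵀP − 2δ PBBᵀP + I < 0, set K = BᵀP, and let H ∈ ℂ^{N×N} be a matrix all of whose eigenvalues have real part at least δ. Then the matrix I_N ⊗ A − H ⊗ (BK) is Hurwitz. -/

import Mathlib

open Matrix

namespace KRHAux

lemma re_quad {n : ℕ} (S : Matrix (Fin n) (Fin n) ℝ) (v : Fin n → ℂ) :
    (star v ⬝ᵥ (S.map Complex.ofReal *ᵥ v)).re
      = (fun i => (v i).re) ⬝ᵥ (S *ᵥ fun i => (v i).re)
        + (fun i => (v i).im) ⬝ᵥ (S *ᵥ fun i => (v i).im) := by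
  simp only [dotProduct, mulVec, map_apply, Pi.star_apply, Finset.mul_sum]
  rw [Complex.re_sum, ← Finset.sum_add_distrib]
  refine Finset.sum_congr rfl fun i _ => ?_
  rw [Complex.re_sum, ← Finset.sum_add_distrib]
  refine Finset.sum_congr rfl fun j _ => ?_
  simp [Complex.mul_re, Complex.mul_im]

lemma im_quad {n : ℕ} {S : Matrix (Fin n) (Fin n) ℝ} (hS : S.IsHermitian) (v : Fin n → ℂ) :
    (star v ⬝ᵥ (S.map Complex.ofReal *ᵥ v)).im = 0 := by
  have hH : (S.map Complex.ofReal).IsHermitian := hS.map Complex.ofReal (fun x => by simp)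
  rw [← Complex.conj_eq_iff_im]
  calc (starRingEnd ℂ) (star v ⬝ᵥ (S.map Complex.ofReal *ᵥ v))
      = star (star v ⬝ᵥ (S.map Complex.ofReal *ᵥ v)) := rfl
    _ = star (S.map Complex.ofReal *ᵥ v) ⬝ᵥ v := by rw [star_dotProduct]; simp
    _ = (star v ᵥ* (S.map Complex.ofReal)ᴴ) ⬝ᵥ v := by rw [star_mulVec]
    _ = star v ⬝ᵥ (S.map Complex.ofReal *ᵥ v) := by rw [hH.eq, ← dotProduct_mulVec]

lemma mapC_mul {n m k : ℕ} (X : Matrix (Fin n) (Fin m) ℝ) (Y : Matrix (Fin m) (Fin k) ℝ) :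
    (X * Y).map Complex.ofReal = (X.map Complex.ofReal) * (Y.map Complex.ofReal) := by
  ext i j
  simp [Matrix.mul_apply]

lemma scalar_step {n m : ℕ}
    (A : Matrix (Fin n) (Fin n) ℝ) (B : Matrix (Fin n) (Fin m) ℝ)
    (δ : ℝ) (hδ : 0 < δ) (P : Matrix (Fin n) (Fin n) ℝ) (hP : P.PosDef)
    (hRic : (-(P * A + A.transpose * P - (2 * δ) • (P * B * B.transpose * P) + 1)).PosDef)
    (lam μ : ℂ) (hlam : δ ≤ lam.re) (v : Fin n → ℂ) (hv : v ≠ 0)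
    (heig : (A.map Complex.ofReal - lam • (B * B.transpose * P).map Complex.ofReal) *ᵥ v
      = μ • v) : μ.re < 0 := by
  have hPt : Pᵀ = P := by
    ext i j; have := congrFun (congrFun hP.1 i) j; simpa using this
  set Q : Matrix (Fin n) (Fin n) ℝ := P * B * B.transpose * P with hQdef
  have hQps : Q.PosSemidef := by
    have h := Matrix.posSemidef_conjTranspose_mul_self (B.transpose * P)
    have he : (B.transpose * P)ᴴ * (B.transpose * P) = Q := by
      rw [conjTranspose_eq_transpose_of_trivial, transpose_mul, transpose_transpose, hPt,
        hQdef]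
      simp [Matrix.mul_assoc]
    rwa [he] at h
  -- main identity
  have h1 : star v ⬝ᵥ (((P*A).map Complex.ofReal) *ᵥ v)
      - lam * (star v ⬝ᵥ ((Q.map Complex.ofReal) *ᵥ v))
      = μ * (star v ⬝ᵥ ((P.map Complex.ofReal) *ᵥ v)) := by
    have h0 : (P.map Complex.ofReal) *ᵥ ((A.map Complex.ofReal
        - lam • (B * B.transpose * P).map Complex.ofReal) *ᵥ v)
        = μ • ((P.map Complex.ofReal) *ᵥ v) := by
      rw [heig, mulVec_smul]
    rw [sub_mulVec, mulVec_sub, smul_mulVec, mulVec_smul] at h0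
    rw [mulVec_mulVec, mulVec_mulVec, ← mapC_mul, ← mapC_mul] at h0
    have hQe : P * (B * B.transpose * P) = Q := by rw [hQdef]; simp [Matrix.mul_assoc]
    rw [hQe] at h0
    have := congrArg (fun w => star v ⬝ᵥ w) h0
    simpa [dotProduct_sub, dotProduct_smul, smul_eq_mul] using this
  -- real and imaginary components
  set x : Fin n → ℝ := fun i => (v i).re with hxdef
  set y : Fin n → ℝ := fun i => (v i).im with hydef
  have hxy : x ≠ 0 ∨ y ≠ 0 := by
    by_contra hc
    push_neg at hc
    apply hv
    funext i
    have h1 := congrFun hc.1 i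
    have h2 := congrFun hc.2 i
    simp only [hxdef, hydef, Pi.zero_apply] at h1 h2
    exact Complex.ext h1 h2
  -- take real parts of h1
  have hqim := im_quad hQps.1 v
  have hpim := im_quad hP.1 v
  have hre := congrArg Complex.re h1
  rw [Complex.sub_re, Complex.mul_re, Complex.mul_re, hqim, hpim] at hre
  simp only [mul_zero, sub_zero] at hre
  rw [re_quad, re_quad, re_quad] at hre
  -- abbreviations for real quadratic forms
  set a : ℝ := x ⬝ᵥ ((P*A) *ᵥ x) + y ⬝ᵥ ((P*A) *ᵥ y) with hadef
  set q : ℝ := x ⬝ᵥ (Q *ᵥ x) + y ⬝ᵥ (Q *ᵥ y) with hqdef2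
  set c : ℝ := x ⬝ᵥ (P *ᵥ x) + y ⬝ᵥ (P *ᵥ y) with hcdef
  -- positivity facts
  have hpsd : ∀ z : Fin n → ℝ, 0 ≤ z ⬝ᵥ (Q *ᵥ z) := fun z => by
    have := hQps.dotProduct_mulVec_nonneg z; simpa using this
  have hppos : ∀ z : Fin n → ℝ, 0 ≤ z ⬝ᵥ (P *ᵥ z) := fun z => by
    have := hP.posSemidef.dotProduct_mulVec_nonneg z; simpa using this
  have hppos' : ∀ z : Fin n → ℝ, z ≠ 0 → 0 < z ⬝ᵥ (P *ᵥ z) := fun z hz => by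
    have := hP.dotProduct_mulVec_pos hz; simpa using this
  have hqnn : 0 ≤ q := add_nonneg (hpsd x) (hpsd y)
  have hcpos : 0 < c := by
    rcases hxy with h | h
    · exact add_pos_of_pos_of_nonneg (hppos' x h) (hppos y)
    · exact add_pos_of_nonneg_of_pos (hppos x) (hppos' y h)
  -- the Riccati quadratic inequality over ℝ
  have hric : ∀ z : Fin n → ℝ, z ≠ 0 →
      2 * (z ⬝ᵥ ((P*A) *ᵥ z)) < 2*δ*(z ⬝ᵥ (Q *ᵥ z)) - z ⬝ᵥ z := by
    intro z hz
    have h := hRic.dotProduct_mulVec_pos hz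
    have hAtP : z ⬝ᵥ ((Aᵀ * P) *ᵥ z) = z ⬝ᵥ ((P * A) *ᵥ z) := by
      have : Aᵀ * P = (P * A)ᵀ := by rw [transpose_mul, hPt]
      rw [this, dotProduct_mulVec, vecMul_transpose, dotProduct_comm]
    rw [neg_mulVec] at h
    simp only [star_trivial, dotProduct_neg, add_mulVec, sub_mulVec, smul_mulVec,
      one_mulVec, dotProduct_add, dotProduct_sub, dotProduct_smul, smul_eq_mul] at h
    rw [hAtP] at h
    linarith
  have hric0 : ∀ z : Fin n → ℝ,
      2 * (z ⬝ᵥ ((P*A) *ᵥ z)) ≤ 2*δ*(z ⬝ᵥ (Q *ᵥ z)) - z ⬝ᵥ z := by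
    intro z
    by_cases hz : z = 0
    · subst hz; simp
    · exact le_of_lt (hric z hz)
  have hzz : ∀ z : Fin n → ℝ, 0 ≤ z ⬝ᵥ z := fun z =>
    Finset.sum_nonneg fun i _ => mul_self_nonneg _
  have hkey : 2 * a < 2*δ*q - (x ⬝ᵥ x + y ⬝ᵥ y) := by
    rcases hxy with h | h
    · have h1 := hric x h
      have h2 := hric0 y
      rw [hadef, hqdef2]; linarith
    · have h1 := hric0 x
      have h2 := hric y h
      rw [hadef, hqdef2]; linarith
  have hxxyy : 0 ≤ x ⬝ᵥ x + y ⬝ᵥ y := add_nonneg (hzz x) (hzz y)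
  -- combine: μ.re * c = a - lam.re * q
  have hlamq : δ * q ≤ lam.re * q := mul_le_mul_of_nonneg_right hlam hqnn
  nlinarith [hre, hkey, hcpos, hqnn, hxxyy, hlamq]


lemma descend {N n : ℕ} (Ac Mc : Matrix (Fin n) (Fin n) ℂ) (T : Matrix (Fin N) (Fin N) ℂ)
    (V : Matrix (Fin n) (Fin N) ℂ) (μ lam : ℂ)
    (hV : ∀ w : Fin N → ℂ, Ac *ᵥ (V *ᵥ w) - Mc *ᵥ (V *ᵥ (T *ᵥ w)) = μ • (V *ᵥ w)) :
    ∀ (k : ℕ) (u : Fin N → ℂ),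
      ((Matrix.toLin' T - lam • (1 : Module.End ℂ (Fin N → ℂ))) ^ k) u = 0 →
      V *ᵥ u ≠ 0 →
      ∃ v, v ≠ 0 ∧ (Ac - lam • Mc) *ᵥ v = μ • v := by
  intro k
  induction k with
  | zero =>
    intro u hu hVu
    simp only [pow_zero, Module.End.one_apply] at hu
    exact absurd (by rw [hu, mulVec_zero]) hVu
  | succ k ih =>
    intro u hu hVu
    set u' : Fin N → ℂ := T *ᵥ u - lam • u with hu'def
    have hu'eq : (Matrix.toLin' T - lam • (1 : Module.End ℂ (Fin N → ℂ))) u = u' := by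
      simp [hu'def, Matrix.toLin'_apply]
    have hchain : ((Matrix.toLin' T - lam • (1 : Module.End ℂ (Fin N → ℂ))) ^ k) u' = 0 := by
      rw [← hu'eq, ← Module.End.mul_apply, ← pow_succ]
      exact hu
    by_cases hVu' : V *ᵥ u' = 0
    · refine ⟨V *ᵥ u, hVu, ?_⟩
      have hTu : T *ᵥ u = u' + lam • u := by rw [hu'def]; ring_nf -- fix below
      have h := hV u
      rw [hTu, mulVec_add, mulVec_smul, hVu', zero_add] at h
      rw [sub_mulVec, smul_mulVec]
      rw [mulVec_smul] at h
      linear_combination (norm := module) h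
    · exact ih u' hchain hVu'

lemma exists_eigenvec {κ : Type*} [Fintype κ] [DecidableEq κ] (M : Matrix κ κ ℂ) (μ : ℂ)
    (hμ : μ ∈ spectrum ℂ M) : ∃ z, z ≠ 0 ∧ M *ᵥ z = μ • z := by
  rw [spectrum.mem_iff] at hμ
  have hdet : (algebraMap ℂ (Matrix κ κ ℂ) μ - M).det = 0 := by
    by_contra h
    exact hμ (Matrix.isUnit_iff_isUnit_det _ |>.mpr (isUnit_iff_ne_zero.mpr h))
  obtain ⟨z, hz, hzeq⟩ := (Matrix.exists_mulVec_eq_zero_iff).mpr hdet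
  refine ⟨z, hz, ?_⟩
  rw [sub_mulVec] at hzeq
  have : (algebraMap ℂ (Matrix κ κ ℂ) μ) *ᵥ z = μ • z := by
    funext i
    simp [Matrix.algebraMap_eq_diagonal, mulVec_diagonal]
  rw [this] at hzeq
  rw [← sub_eq_zero]
  rw [sub_eq_zero] at hzeq ⊢
  exact hzeq.symm

lemma kron_reduce {N n : ℕ} (Ac Mc : Matrix (Fin n) (Fin n) ℂ) (H : Matrix (Fin N) (Fin N) ℂ)
    (μ : ℂ)
    (hz : ∃ z, z ≠ 0 ∧ (Matrix.kroneckerMap (· * ·) (1 : Matrix (Fin N) (Fin N) ℂ) Ac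
      - Matrix.kroneckerMap (· * ·) H Mc) *ᵥ z = μ • z)
    (hdesc : ∀ (lam : ℂ) (V : Matrix (Fin n) (Fin N) ℂ),
      (∀ w : Fin N → ℂ, Ac *ᵥ (V *ᵥ w) - Mc *ᵥ (V *ᵥ (Hᵀ *ᵥ w)) = μ • (V *ᵥ w)) →
      ∀ (k : ℕ) (u : Fin N → ℂ),
        ((Matrix.toLin' Hᵀ - lam • (1 : Module.End ℂ (Fin N → ℂ))) ^ k) u = 0 →
        V *ᵥ u ≠ 0 →
        ∃ v, v ≠ 0 ∧ (Ac - lam • Mc) *ᵥ v = μ • v) :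
    ∃ lam ∈ spectrum ℂ H, ∃ v, v ≠ 0 ∧ (Ac - lam • Mc) *ᵥ v = μ • v := by
  obtain ⟨z, hzne, hzeq⟩ := hz
  set V : Matrix (Fin n) (Fin N) ℂ := Matrix.of (fun i j => z (j, i)) with hVdef
  have hVeq : Ac * V - Mc * V * Hᵀ = μ • V := by
    ext i j
    have h := congrFun hzeq (j, i)
    simp only [mulVec, dotProduct, Fintype.sum_prod_type, Matrix.sub_apply, kroneckerMap_apply,
      Matrix.one_apply, Pi.smul_apply, smul_eq_mul, sub_mul, Finset.sum_sub_distrib,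
      ite_mul, one_mul, zero_mul] at h
    rw [Finset.sum_comm] at h
    simp only [Finset.sum_ite_eq, Finset.mem_univ, if_true] at h
    simp only [Matrix.sub_apply, Matrix.smul_apply, Matrix.mul_apply, Matrix.of_apply,
      transpose_apply, smul_eq_mul, Finset.sum_mul, hVdef]
    rw [← h]
    congr 1
    refine Finset.sum_congr rfl fun j' _ => Finset.sum_congr rfl fun i' _ => by ring
  have hV : ∀ w : Fin N → ℂ, Ac *ᵥ (V *ᵥ w) - Mc *ᵥ (V *ᵥ (Hᵀ *ᵥ w)) = μ • (V *ᵥ w) := by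
    intro w
    have := congrArg (fun M => M *ᵥ w) hVeq
    simpa [sub_mulVec, smul_mulVec, ← mulVec_mulVec] using this
  -- find a column of V that is nonzero
  obtain ⟨p, hp⟩ := Function.ne_iff.mp hzne
  set w₀ : Fin N → ℂ := Pi.single p.1 1 with hw₀def
  have hVw₀ : V *ᵥ w₀ ≠ 0 := by
    intro hc
    have := congrFun hc p.2
    rw [hw₀def] at this
    simp only [mulVec_single, Pi.zero_apply, mul_one] at this
    exact hp (by simpa [hVdef] using this)
  -- generalized eigenspace decomposition
  set f : Module.End ℂ (Fin N → ℂ) := Matrix.toLin' Hᵀ with hfdef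
  have key : ∃ lam, ∃ u, u ∈ f.maxGenEigenspace lam ∧ V *ᵥ u ≠ 0 := by
    by_contra hcon
    push_neg at hcon
    have hle : (⨆ lam, f.maxGenEigenspace lam) ≤ LinearMap.ker V.mulVecLin :=
      iSup_le fun lam => fun u hu => by
        simp only [LinearMap.mem_ker, mulVecLin_apply]
        exact hcon lam u hu
    have htop := Module.End.iSup_maxGenEigenspace_eq_top f
    rw [htop] at hle
    have := hle (Submodule.mem_top : w₀ ∈ ⊤)
    simp only [LinearMap.mem_ker, mulVecLin_apply] at this
    exact hVw₀ this
  obtain ⟨lam, u, hu, hVu⟩ := key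
  obtain ⟨k, hk⟩ := (Module.End.mem_maxGenEigenspace f lam u).mp hu
  have hune : u ≠ 0 := fun hc => hVu (by rw [hc, mulVec_zero])
  have hlam : lam ∈ spectrum ℂ H := by
    have hgen : f.HasGenEigenvalue lam k := by
      rw [Module.End.hasGenEigenvalue_iff]
      rw [Submodule.ne_bot_iff]
      exact ⟨u, (Module.End.mem_genEigenspace_nat).mpr hk, hune⟩
    have hev : f.HasEigenvalue lam := Module.End.hasEigenvalue_of_hasGenEigenvalue hgen
    have hsp : lam ∈ spectrum ℂ f := Module.End.hasEigenvalue_iff_mem_spectrum.mp hev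
    have hft : spectrum ℂ f = spectrum ℂ Hᵀ := by
      have : f = Matrix.toLinAlgEquiv' Hᵀ := rfl
      rw [this, AlgEquiv.spectrum_eq]
    rw [hft] at hsp
    -- spectrum of transpose equals spectrum
    rw [spectrum.mem_iff] at hsp ⊢
    intro hunit
    apply hsp
    rw [Matrix.isUnit_iff_isUnit_det] at hunit ⊢
    rw [show algebraMap ℂ (Matrix (Fin N) (Fin N) ℂ) lam - Hᵀ
        = (algebraMap ℂ (Matrix (Fin N) (Fin N) ℂ) lam - H)ᵀ by
      rw [transpose_sub]
      congr 1
      simp [Matrix.algebraMap_eq_diagonal], det_transpose]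
    exact hunit
  exact ⟨lam, hlam, hdesc lam V hV k u hk hVu⟩

end KRHAux

/-- let `δ > 0`, let `P > 0` solve `P A + Aᵀ P − 2δ P B Bᵀ P + I < 0`,
set `K = Bᵀ P`, and let `H` be a complex matrix all of whose eigenvalues have real
part at least `δ`.  Then `I_N ⊗ A − H ⊗ (B K)` is Hurwitz. -/
theorem kronecker_riccati_hurwitz {N n m : ℕ}
    (A : Matrix (Fin n) (Fin n) ℝ) (B : Matrix (Fin n) (Fin m) ℝ)
    (δ : ℝ) (hδ : 0 < δ) (P : Matrix (Fin n) (Fin n) ℝ) (hP : P.PosDef)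
    (hRic : (-(P * A + A.transpose * P - (2 * δ) • (P * B * B.transpose * P) + 1)).PosDef)
    (H : Matrix (Fin N) (Fin N) ℂ) (hH : ∀ μ ∈ spectrum ℂ H, δ ≤ μ.re) :
    ∀ μ ∈ spectrum ℂ
        (Matrix.kroneckerMap (· * ·) (1 : Matrix (Fin N) (Fin N) ℂ) (A.map Complex.ofReal)
          - Matrix.kroneckerMap (· * ·) H ((B * B.transpose * P).map Complex.ofReal)),
      μ.re < 0 := by
  intro μ hμ
  obtain ⟨lam, hlam, v, hvne, hveq⟩ :=
    KRHAux.kron_reduce (A.map Complex.ofReal) ((B * B.transpose * P).map Complex.ofReal) H μ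
      (KRHAux.exists_eigenvec _ μ hμ)
      (fun lam V hV => KRHAux.descend _ _ Hᵀ V μ lam hV)
  exact KRHAux.scalar_step A B δ hδ P hP hRic lam μ (hH lam hlam) v hvne hveq
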